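/- arXiv:2309.05084 — 2 statements merged into one kernel-verified Lean document; each statement's English description precedes it below -/
import Mathlib

section
/- If two distribution functions F₁ and F₂ on ℝ satisfy F₁(y) - 0.5·m₁(y) = F₂(y) - 0.5·m₂(y) for all y, where m_i(y) is the jump of F_i at y (m_i(y) = F_i(y) - F_i(y⁻)), then F₁ = F₂; i.e., the mid-CDF uniquely determines the distribution. -/
open Set Filter Function

/-- If two CDFs F₁, F₂ (right-continuous, nondecreasing, with limits 0 at -∞ and 1 at +∞)
have the same mid-CDF G_i(y) = F_i(y) - 0.5 * (F_i(y) - F_i(y⁻)), then F₁ = F₂: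
the mid-CDF uniquely determines the distribution. -/
theorem midCDF_determines_CDF (F₁ F₂ : ℝ → ℝ)
    (hm₁ : Monotone F₁) (hm₂ : Monotone F₂)
    (hrc₁ : ∀ y, ContinuousWithinAt F₁ (Ici y) y)
    (hrc₂ : ∀ y, ContinuousWithinAt F₂ (Ici y) y)
    (hbot₁ : Tendsto F₁ atBot (nhds 0)) (htop₁ : Tendsto F₁ atTop (nhds 1))
    (hbot₂ : Tendsto F₂ atBot (nhds 0)) (htop₂ : Tendsto F₂ atTop (nhds 1))
    (hmid : ∀ y : ℝ,
      F₁ y - 0.5 * (F₁ y - leftLim F₁ y) = F₂ y - 0.5 * (F₂ y - leftLim F₂ y)) :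
    F₁ = F₂ := by
  set S := {x | ¬ContinuousWithinAt F₁ (Iio x) x} ∪
      {x | ¬ContinuousWithinAt F₂ (Iio x) x} with hSdef
  have hS : S.Countable :=
    (show Set.Countable {x | ¬ContinuousWithinAt F₁ (Iio x) x} by
        simpa using (hm₁.monotoneOn univ).countable_not_continuousWithinAt_Iio).union
      (show Set.Countable {x | ¬ContinuousWithinAt F₂ (Iio x) x} by
        simpa using (hm₂.monotoneOn univ).countable_not_continuousWithinAt_Iio)
  have hdense : Dense Sᶜ := hS.dense_compl ℝ
  have heq : ∀ x ∉ S, F₁ x = F₂ x := by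
    intro x hx
    simp only [hSdef, mem_union, mem_setOf_eq, not_or, not_not] at hx
    have h1 := hm₁.continuousWithinAt_Iio_iff_leftLim_eq.1 hx.1
    have h2 := hm₂.continuousWithinAt_Iio_iff_leftLim_eq.1 hx.2
    have h3 := hmid x
    rw [h1, h2] at h3
    linarith
  funext y
  have hex : ∀ n : ℕ, ∃ x, x ∈ Sᶜ ∧ x ∈ Ioo y (y + 1 / (n + 1)) := by
    intro n
    have hpos : (0 : ℝ) < 1 / (n + 1) := by positivity
    exact hdense.exists_mem_open isOpen_Ioo ⟨y + 1 / (n + 1) / 2, by constructor <;> linarith⟩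
  choose u hu₁ hu₂ using hex
  have hlim : Tendsto u atTop (nhds y) := by
    have h1 : Tendsto (fun n : ℕ => y + 1 / (n + 1 : ℝ)) atTop (nhds y) := by
      have := tendsto_one_div_add_atTop_nhds_zero_nat (𝕜 := ℝ)
      simpa using tendsto_const_nhds.add this
    refine tendsto_of_tendsto_of_tendsto_of_le_of_le tendsto_const_nhds h1
      (fun n => (hu₂ n).1.le) (fun n => (hu₂ n).2.le)
  have hlim' : Tendsto u atTop (nhdsWithin y (Ici y)) :=
    tendsto_nhdsWithin_of_tendsto_nhds_of_eventually_within u hlim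
      (Eventually.of_forall fun n => (hu₂ n).1.le)
  have t1 : Tendsto (fun n => F₁ (u n)) atTop (nhds (F₁ y)) := (hrc₁ y).tendsto.comp hlim'
  have t2 : Tendsto (fun n => F₂ (u n)) atTop (nhds (F₂ y)) := (hrc₂ y).tendsto.comp hlim'
  have : (fun n => F₁ (u n)) = fun n => F₂ (u n) := funext fun n => heq (u n) (hu₁ n)
  rw [this] at t1
  exact tendsto_nhds_unique t1 t2
end

section
/- Let Y be discrete with finite support and let G be its mid-CDF. If the conditional mid-CDF of Y given Z, G_{Y|Z=z}(y) = F_{Y|Z=z}(y) - 0.5·P(Y = y | Z = z), does not depend on z for all y, then the conditional CDF F_{Y|Z=z}(y) does not depend on z for all y, i.e., Y is independent of Z. -/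
open MeasureTheory Set

/-- Let Y be discrete with finite range and Z discrete with countable range. If the
conditional mid-CDF of Y given Z = z, G_{Y|Z=z}(y) = F_{Y|Z=z}(y) - 0.5 * P(Y = y | Z = z),
does not depend on z (over the support of Z), then the conditional CDF F_{Y|Z=z}(y) does
not depend on z, and Y is independent of Z (joint probabilities factorize). -/
theorem indep_of_cond_midCDF_const {Ω : Type*} [MeasurableSpace Ω]
    (μ : Measure Ω) [IsProbabilityMeasure μ]
    (Y Z : Ω → ℝ) (hY : Measurable Y) (hZ : Measurable Z)
    (hYfin : (Set.range Y).Finite) (hZcount : (Set.range Z).Countable)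
    (F m : ℝ → ℝ → ℝ)
    (hF : ∀ z y, F z y =
      (μ {ω | Y ω ≤ y ∧ Z ω = z}).toReal / (μ {ω | Z ω = z}).toReal)
    (hm : ∀ z y, m z y =
      (μ {ω | Y ω = y ∧ Z ω = z}).toReal / (μ {ω | Z ω = z}).toReal)
    (hmid : ∀ z z' : ℝ, 0 < μ {ω | Z ω = z} → 0 < μ {ω | Z ω = z'} →
      ∀ y : ℝ, F z y - 0.5 * m z y = F z' y - 0.5 * m z' y) :
    (∀ z z' : ℝ, 0 < μ {ω | Z ω = z} → 0 < μ {ω | Z ω = z'} →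
      ∀ y : ℝ, F z y = F z' y) ∧
    (∀ y z : ℝ, μ {ω | Y ω ≤ y ∧ Z ω = z} = μ {ω | Y ω ≤ y} * μ {ω | Z ω = z}) := by
  classical
  set s : Finset ℝ := hYfin.toFinset with hs
  -- measurability of the basic sets
  have measA : ∀ t z : ℝ, MeasurableSet {ω | Y ω = t ∧ Z ω = z} := by
    intro t z
    have : {ω | Y ω = t ∧ Z ω = z} = Y ⁻¹' {t} ∩ Z ⁻¹' {z} := by
      ext ω; simp [Set.mem_preimage]
    rw [this]
    exact (hY (measurableSet_singleton t)).inter (hZ (measurableSet_singleton z))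
  have measB : ∀ y z : ℝ, MeasurableSet {ω | Y ω ≤ y ∧ Z ω = z} := by
    intro y z
    have : {ω | Y ω ≤ y ∧ Z ω = z} = Y ⁻¹' (Set.Iic y) ∩ Z ⁻¹' {z} := by
      ext ω; simp [Set.mem_preimage]
    rw [this]
    exact (hY measurableSet_Iic).inter (hZ (measurableSet_singleton z))
  -- decomposition of the joint cdf set into atoms
  have hdecomp : ∀ z y : ℝ, μ {ω | Y ω ≤ y ∧ Z ω = z}
      = ∑ t ∈ s.filter (· ≤ y), μ {ω | Y ω = t ∧ Z ω = z} := by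
    intro z y
    have hUnion : {ω | Y ω ≤ y ∧ Z ω = z}
        = ⋃ t ∈ s.filter (· ≤ y), {ω | Y ω = t ∧ Z ω = z} := by
      ext ω
      simp only [Set.mem_setOf_eq, Set.mem_iUnion, Finset.mem_filter, exists_prop]
      constructor
      · rintro ⟨hle, hz⟩
        refine ⟨Y ω, ⟨?_, hle⟩, rfl, hz⟩
        simp [hs, Set.Finite.mem_toFinset]
      · rintro ⟨t, ⟨_, hty⟩, hYt, hz⟩
        exact ⟨hYt ▸ hty, hz⟩
    rw [hUnion, measure_biUnion_finset]
    · intro t _ t' _ htt'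
      rw [Function.onFun, Set.disjoint_left]
      rintro ω ⟨h1, _⟩ ⟨h2, _⟩
      exact htt' (h1 ▸ h2)
    · intro t _; exact measA t z
  -- F as a finite sum of m's
  have hFsum : ∀ z y : ℝ, F z y = ∑ t ∈ s.filter (· ≤ y), m z t := by
    intro z y
    rw [hF, hdecomp z y, ENNReal.toReal_sum (fun t _ => measure_ne_top μ _),
      Finset.sum_div]
    exact Finset.sum_congr rfl fun t _ => (hm z t).symm
  -- m vanishes off the range of Y
  have hm0 : ∀ z y : ℝ, y ∉ s → m z y = 0 := by
    intro z y hy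
    have : {ω | Y ω = y ∧ Z ω = z} = ∅ := by
      ext ω
      simp only [Set.mem_setOf_eq, Set.mem_empty_iff_false, iff_false]
      rintro ⟨hYω, _⟩
      exact hy (by simp [hs, Set.Finite.mem_toFinset, ← hYω])
    rw [hm, this]; simp
  -- filter split
  have hsplit : ∀ y : ℝ, y ∈ s →
      s.filter (· ≤ y) = insert y (s.filter (· < y)) := by
    intro y hy
    ext t
    simp only [Finset.mem_filter, Finset.mem_insert]
    constructor
    · rintro ⟨hts, hty⟩
      rcases lt_or_eq_of_le hty with h | h
      · exact Or.inr ⟨hts, h⟩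
      · exact Or.inl h
    · rintro (rfl | ⟨hts, hty⟩)
      · exact ⟨hy, le_refl _⟩
      · exact ⟨hts, le_of_lt hty⟩
  -- key: m does not depend on z on the support
  have key : ∀ z z' : ℝ, 0 < μ {ω | Z ω = z} → 0 < μ {ω | Z ω = z'} →
      ∀ n : ℕ, ∀ y : ℝ, (s.filter (· < y)).card ≤ n → m z y = m z' y := by
    intro z z' hz hz' n
    induction n with
    | zero =>
      intro y hcard
      by_cases hy : y ∈ s
      · have hemp : s.filter (· < y) = ∅ := Finset.card_eq_zero.mp (Nat.le_zero.mp hcard)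
        have h := hmid z z' hz hz' y
        rw [hFsum z y, hFsum z' y, hsplit y hy,
          Finset.sum_insert (by simp), Finset.sum_insert (by simp), hemp] at h
        simp only [Finset.sum_empty, add_zero] at h
        linarith
      · rw [hm0 z y hy, hm0 z' y hy]
    | succ n IH =>
      intro y hcard
      by_cases hy : y ∈ s
      · have h := hmid z z' hz hz' y
        rw [hFsum z y, hFsum z' y, hsplit y hy,
          Finset.sum_insert (by simp), Finset.sum_insert (by simp)] at h
        have hL : ∑ t ∈ s.filter (· < y), m z t = ∑ t ∈ s.filter (· < y), m z' t := by
          refine Finset.sum_congr rfl fun t ht => ?_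
          have ht' : t ∈ s ∧ t < y := by simpa using ht
          have hsub : s.filter (· < t) ⊂ s.filter (· < y) := by
            refine Finset.ssubset_iff_of_subset ?_ |>.mpr ⟨t, ht, by simp⟩
            intro u hu
            have hu' : u ∈ s ∧ u < t := by simpa using hu
            exact Finset.mem_filter.mpr ⟨hu'.1, hu'.2.trans ht'.2⟩
          have : (s.filter (· < t)).card < (s.filter (· < y)).card :=
            Finset.card_lt_card hsub
          exact IH t (by omega)
        rw [hL] at h
        linarith
      · rw [hm0 z y hy, hm0 z' y hy]
  have Fconst : ∀ z z' : ℝ, 0 < μ {ω | Z ω = z} → 0 < μ {ω | Z ω = z'} →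
      ∀ y : ℝ, F z y = F z' y := by
    intro z z' hz hz' y
    rw [hFsum z y, hFsum z' y]
    exact Finset.sum_congr rfl fun t _ => key z z' hz hz' _ t le_rfl
  refine ⟨Fconst, ?_⟩
  intro y z
  -- countable decomposition over range Z
  have measC : ∀ w : ℝ, MeasurableSet {ω | Z ω = w} := by
    intro w
    have : {ω | Z ω = w} = Z ⁻¹' {w} := by ext ω; simp
    rw [this]; exact hZ (measurableSet_singleton w)
  have hpd : (Set.range Z).PairwiseDisjoint (fun w => {ω | Z ω = w}) := by
    intro a _ b _ hab
    rw [Function.onFun, Set.disjoint_left]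
    rintro ω h1 h2
    exact hab ((h1 : Z ω = a) ▸ (h2 : Z ω = b))
  have hpd' : (Set.range Z).PairwiseDisjoint (fun w => {ω | Y ω ≤ y ∧ Z ω = w}) := by
    intro a _ b _ hab
    rw [Function.onFun, Set.disjoint_left]
    rintro ω ⟨_, h1⟩ ⟨_, h2⟩
    exact hab (h1 ▸ h2)
  have hCunion : (⋃ w ∈ Set.range Z, {ω | Z ω = w}) = Set.univ := by
    ext ω
    simp only [Set.mem_iUnion, Set.mem_univ, iff_true, Set.mem_setOf_eq]
    exact ⟨Z ω, Set.mem_range_self ω, rfl⟩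
  have hBunion : (⋃ w ∈ Set.range Z, {ω | Y ω ≤ y ∧ Z ω = w}) = {ω | Y ω ≤ y} := by
    ext ω
    simp only [Set.mem_iUnion, Set.mem_setOf_eq]
    constructor
    · rintro ⟨w, _, h, _⟩; exact h
    · intro h; exact ⟨Z ω, Set.mem_range_self ω, h, rfl⟩
  have hsumC : ∑' w : ↥(Set.range Z), μ {ω | Z ω = (w : ℝ)} = 1 := by
    rw [← measure_biUnion hZcount hpd (fun w _ => measC w), hCunion, measure_univ]
  have hsumB : ∑' w : ↥(Set.range Z), μ {ω | Y ω ≤ y ∧ Z ω = (w : ℝ)}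
      = μ {ω | Y ω ≤ y} := by
    rw [← measure_biUnion hZcount hpd' (fun w _ => measB y w), hBunion]
  -- find a point of positive mass
  have hex : ∃ z₀ : ℝ, 0 < μ {ω | Z ω = z₀} := by
    by_contra hcon
    push_neg at hcon
    have : ∀ w : ↥(Set.range Z), μ {ω | Z ω = (w : ℝ)} = 0 := fun w =>
      le_antisymm (hcon w) zero_le
    rw [tsum_congr this, tsum_zero] at hsumC
    exact zero_ne_one hsumC
  obtain ⟨z₀, hz₀⟩ := hex
  set Fy : ℝ := F z₀ y with hFy
  have hFynn : 0 ≤ Fy := by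
    rw [hFy, hF]
    positivity
  set eF : ENNReal := ENNReal.ofReal Fy with heF
  -- the factorization at each point of positive mass
  have hfac : ∀ w : ℝ, μ {ω | Y ω ≤ y ∧ Z ω = w} = eF * μ {ω | Z ω = w} := by
    intro w
    rcases eq_or_lt_of_le (zero_le : (0 : ENNReal) ≤ μ {ω | Z ω = w}) with hw | hw
    · have hsub : {ω | Y ω ≤ y ∧ Z ω = w} ⊆ {ω | Z ω = w} := fun ω h => h.2
      have : μ {ω | Y ω ≤ y ∧ Z ω = w} = 0 :=
        le_antisymm (le_trans (measure_mono hsub) hw.ge) zero_le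
      rw [this, ← hw, mul_zero]
    · have hFw : F w y = Fy := Fconst w z₀ hw hz₀ y
      have hcne : (μ {ω | Z ω = w}).toReal ≠ 0 :=
        ENNReal.toReal_ne_zero.mpr ⟨hw.ne', measure_ne_top μ _⟩
      have hbr : (μ {ω | Y ω ≤ y ∧ Z ω = w}).toReal = Fy * (μ {ω | Z ω = w}).toReal := by
        have := hF w y
        rw [hFw] at this
        field_simp at this
        linarith [this]
      calc μ {ω | Y ω ≤ y ∧ Z ω = w}
          = ENNReal.ofReal ((μ {ω | Y ω ≤ y ∧ Z ω = w}).toReal) :=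
            (ENNReal.ofReal_toReal (measure_ne_top μ _)).symm
        _ = ENNReal.ofReal (Fy * (μ {ω | Z ω = w}).toReal) := by rw [hbr]
        _ = eF * ENNReal.ofReal ((μ {ω | Z ω = w}).toReal) := by
            rw [ENNReal.ofReal_mul hFynn]
        _ = eF * μ {ω | Z ω = w} := by
            rw [ENNReal.ofReal_toReal (measure_ne_top μ _)]
  have hmarg : μ {ω | Y ω ≤ y} = eF := by
    rw [← hsumB]
    calc ∑' w : ↥(Set.range Z), μ {ω | Y ω ≤ y ∧ Z ω = (w : ℝ)}
        = ∑' w : ↥(Set.range Z), eF * μ {ω | Z ω = (w : ℝ)} :=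
          tsum_congr fun w => hfac w
      _ = eF * ∑' w : ↥(Set.range Z), μ {ω | Z ω = (w : ℝ)} := ENNReal.tsum_mul_left
      _ = eF := by rw [hsumC, mul_one]
  rw [hmarg, hfac z]
end
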